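/- With G, w, p, and w' as in the FastMap update (w'(u,v) = w(u,v) - |p(u)-p(v)| where p(v) = (d_w(a,v)+d_w(a,b)-d_w(v,b))/2), the new shortest-path distance satisfies d_{w'}(x,y) ≤ d_w(x,y) - |p(x) - p(y)| for all x, y ∈ V. -/
import Mathlib


/-- The total weight of a walk in a graph, under edge weights `w`. -/
noncomputable def walkWeight {V : Type*} {G : SimpleGraph V} (w : V → V → ℝ)
    {x y : V} (p : G.Walk x y) : ℝ :=
  (p.darts.map (fun d => w d.toProd.1 d.toProd.2)).sum

/-- Shortest-path distance between `x` and `y` in `G` under edge weights `w`. -/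
noncomputable def spDist {V : Type*} (G : SimpleGraph V) (w : V → V → ℝ)
    (x y : V) : ℝ :=
  sInf {c : ℝ | ∃ p : G.Walk x y, walkWeight w p = c}

section Aux

variable {V : Type*} {G : SimpleGraph V} (w : V → V → ℝ)

lemma walkWeight_nil {x : V} : walkWeight w (SimpleGraph.Walk.nil : G.Walk x x) = 0 := by
  simp [walkWeight]

lemma walkWeight_cons {x u y : V} (h : G.Adj x u) (q : G.Walk u y) :
    walkWeight w (SimpleGraph.Walk.cons h q) = w x u + walkWeight w q := by
  simp [walkWeight]

lemma walkWeight_append {x y z : V} (P : G.Walk x y) (Q : G.Walk y z) :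
    walkWeight w (P.append Q) = walkWeight w P + walkWeight w Q := by
  induction P with
  | nil => simp [walkWeight_nil]
  | cons h q ih => simp [SimpleGraph.Walk.cons_append, walkWeight_cons, ih]; ring

lemma walkWeight_nonneg (hn : ∀ u v, G.Adj u v → 0 ≤ w u v) {x y : V} (P : G.Walk x y) :
    0 ≤ walkWeight w P := by
  induction P with
  | nil => simp [walkWeight_nil]
  | cons h q ih => rw [walkWeight_cons]; exact add_nonneg (hn _ _ h) ih

lemma spDist_bddBelow (hn : ∀ u v, G.Adj u v → 0 ≤ w u v) (x y : V) :
    BddBelow {c : ℝ | ∃ p : G.Walk x y, walkWeight w p = c} := by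
  refine ⟨0, ?_⟩
  rintro c ⟨Q, rfl⟩
  exact walkWeight_nonneg w hn Q

lemma spDist_le (hn : ∀ u v, G.Adj u v → 0 ≤ w u v) {x y : V} (P : G.Walk x y) :
    spDist G w x y ≤ walkWeight w P :=
  csInf_le (spDist_bddBelow w hn x y) ⟨P, rfl⟩

lemma spDist_triangle (hconn : G.Connected) (hn : ∀ u v, G.Adj u v → 0 ≤ w u v)
    (x y z : V) : spDist G w x z ≤ spDist G w x y + spDist G w y z := by
  have hne1 : {c : ℝ | ∃ p : G.Walk x y, walkWeight w p = c}.Nonempty :=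
    ⟨_, (hconn.preconnected x y).some, rfl⟩
  have hne2 : {c : ℝ | ∃ p : G.Walk y z, walkWeight w p = c}.Nonempty :=
    ⟨_, (hconn.preconnected y z).some, rfl⟩
  have key : spDist G w x z - spDist G w y z ≤ spDist G w x y := by
    refine le_csInf hne1 ?_
    rintro c1 ⟨P, rfl⟩
    have : spDist G w x z - walkWeight w P ≤ spDist G w y z := by
      refine le_csInf hne2 ?_
      rintro c2 ⟨Q, rfl⟩
      have := spDist_le w hn (P.append Q)
      rw [walkWeight_append] at this
      linarith
    linarith
  linarith

lemma walkWeight_reverse (hs : ∀ u v, w u v = w v u) {x y : V} (P : G.Walk x y) :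
    walkWeight w P.reverse = walkWeight w P := by
  unfold walkWeight
  rw [SimpleGraph.Walk.darts_reverse, List.map_reverse, List.sum_reverse, List.map_map]
  congr 1
  refine List.map_congr_left ?_
  intro d _
  simp only [Function.comp_apply, SimpleGraph.Dart.symm_toProd, Prod.fst_swap, Prod.snd_swap]
  exact hs d.toProd.2 d.toProd.1

lemma spDist_symm (hconn : G.Connected) (hs : ∀ u v, w u v = w v u)
    (hn : ∀ u v, G.Adj u v → 0 ≤ w u v) (x y : V) :
    spDist G w x y = spDist G w y x := by
  have key : ∀ u v : V, spDist G w u v ≤ spDist G w v u := by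
    intro u v
    refine le_csInf ⟨_, (hconn.preconnected v u).some, rfl⟩ ?_
    rintro c ⟨P, rfl⟩
    have := spDist_le w hn P.reverse
    rwa [walkWeight_reverse w hs] at this
  exact le_antisymm (key x y) (key y x)

lemma abs_sub_le_dartSum (p : V → ℝ) {x y : V} (P : G.Walk x y) :
    |p x - p y| ≤ (P.darts.map (fun d => |p d.toProd.1 - p d.toProd.2|)).sum := by
  induction P with
  | nil => simp
  | @cons x u y h q ih =>
    simp only [SimpleGraph.Walk.darts_cons, List.map_cons, List.sum_cons]
    have h1 : |p x - p y| ≤ |p x - p u| + |p u - p y| := abs_sub_le _ _ _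
    linarith

end Aux

/-- After one FastMap update, the new shortest-path distance satisfies
`d_{w'}(x,y) ≤ d_w(x,y) - |p(x) - p(y)|`. -/
theorem fastmap_update_distance_bound {V : Type*} [Fintype V]
    (G : SimpleGraph V) (hconn : G.Connected) (w : V → V → ℝ)
    (hsymm : ∀ u v, w u v = w v u)
    (hnonneg : ∀ u v, G.Adj u v → 0 ≤ w u v)
    (a b : V) (p : V → ℝ)
    (hp : ∀ v, p v = (spDist G w a v + spDist G w a b - spDist G w v b) / 2)
    (w' : V → V → ℝ)
    (hw' : ∀ u v, w' u v = w u v - |p u - p v|) :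
    ∀ x y : V, spDist G w' x y ≤ spDist G w x y - |p x - p y| := by
  -- |p u - p v| ≤ spDist w u v
  have hplip : ∀ u v : V, |p u - p v| ≤ spDist G w u v := by
    intro u v
    have t1 := spDist_triangle w hconn hnonneg a v u
    have t2 := spDist_triangle w hconn hnonneg a u v
    have t3 := spDist_triangle w hconn hnonneg v u b
    have t4 := spDist_triangle w hconn hnonneg u v b
    have s1 := spDist_symm w hconn hsymm hnonneg u v
    rw [abs_le]
    constructor <;> rw [hp u, hp v] <;> linarith
  -- w' nonneg on edges
  have hnonneg' : ∀ u v, G.Adj u v → 0 ≤ w' u v := by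
    intro u v huv
    have h1 : spDist G w u v ≤ w u v := by
      have := spDist_le w hnonneg (SimpleGraph.Walk.cons huv SimpleGraph.Walk.nil)
      rwa [walkWeight_cons, walkWeight_nil, add_zero] at this
    have := hplip u v
    rw [hw']
    linarith
  intro x y
  -- walkWeight w' P ≤ walkWeight w P - |p x - p y|
  have hwalk : ∀ P : G.Walk x y, walkWeight w' P ≤ walkWeight w P - |p x - p y| := by
    intro P
    have heq : walkWeight w' P =
        walkWeight w P - (P.darts.map (fun d => |p d.toProd.1 - p d.toProd.2|)).sum := by
      unfold walkWeight
      induction P with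
      | nil => simp
      | cons h q ih =>
        simp only [SimpleGraph.Walk.darts_cons, List.map_cons, List.sum_cons]
        rw [hw']
        linarith
    have := abs_sub_le_dartSum p P
    linarith
  have key : spDist G w' x y + |p x - p y| ≤ spDist G w x y := by
    refine le_csInf ⟨_, (hconn.preconnected x y).some, rfl⟩ ?_
    rintro c ⟨P, rfl⟩
    have h1 := spDist_le w' hnonneg' P
    have h2 := hwalk P
    linarith
  linarith
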